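/- Let (a_j)_{j≥1} be real numbers in the open interval (0,1) with a_j → 1, and define f_j : ℂ² → ℂ² by f_j(z, w) = (z² + a_j w, a_j z). Then for every point p = (x, y) ∈ ℂ² whose coordinates x and y are real and nonnegative, exactly one of the following holds: f_n ∘ ⋯ ∘ f_1(p) → 0 as n → ∞, or ‖f_n ∘ ⋯ ∘ f_1(p)‖ → ∞ as n → ∞. -/

import Mathlib

open Filter Metric Set
open scoped ENNReal

noncomputable section

/-- `ℂ²` with the Euclidean norm. -/
abbrev E2 := EuclideanSpace ℂ (Fin 2)

/-- The map `f(z, w) = (z² + a w, a z)` on `ℂ²`. -/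
def henon (a : ℂ) (p : E2) : E2 :=
  (WithLp.equiv 2 (Fin 2 → ℂ)).symm ![(p 0) ^ 2 + a * p 1, a * p 0]

/-- `seqComp f n = f n ∘ ⋯ ∘ f 1` (and `seqComp f 0 = id`). -/
def seqComp (f : ℕ → E2 → E2) : ℕ → E2 → E2
  | 0 => id
  | n + 1 => f (n + 1) ∘ seqComp f n

lemma key (a x y : ℕ → ℝ) (ha : ∀ j, 1 ≤ j → a j ∈ Set.Ioo (0:ℝ) 1)
    (hlim : Tendsto a atTop (nhds 1))
    (hx0 : ∀ n, 0 ≤ x n) (hy0 : ∀ n, 0 ≤ y n)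
    (hx : ∀ n, x (n+1) = x n ^ 2 + a (n+1) * y n)
    (hy : ∀ n, y (n+1) = a (n+1) * x n) :
    (Tendsto x atTop (nhds 0) ∧ Tendsto y atTop (nhds 0)) ∨ Tendsto x atTop atTop := by
  have ha' : ∀ n : ℕ, 0 < a (n+1) ∧ a (n+1) < 1 := fun n => ⟨(ha (n+1) (by omega)).1, (ha (n+1) (by omega)).2⟩
  -- x (n+1) ≥ x n ^ 2
  have hsq : ∀ n, x n ^ 2 ≤ x (n+1) := by
    intro n
    have := mul_nonneg (ha' n).1.le (hy0 n)
    rw [hx n]; linarith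
  by_cases hesc : ∃ N, 1 < x N
  · right
    obtain ⟨N, hN⟩ := hesc
    have hgrow : ∀ k, x N ^ (k+1) ≤ x (N + k) := by
      intro k
      induction k with
      | zero => simpa using le_refl (x N)
      | succ k ih =>
        have h1 : x N ^ (k+1) ≤ x (N+k) := ih
        have h2 : x (N+k) ^ 2 ≤ x (N+k+1) := hsq _
        have h3 : (x N ^ (k+1))^2 ≤ x (N+k) ^ 2 :=
          pow_le_pow_left₀ (by positivity) h1 2
        have h4 : x N ^ (k+2) ≤ (x N ^ (k+1))^2 := by
          rw [← pow_mul]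
          exact pow_le_pow_right₀ (le_of_lt hN) (by omega)
        calc x N ^ (k+1+1) ≤ (x N ^ (k+1))^2 := h4
          _ ≤ x (N+k)^2 := h3
          _ ≤ x (N + (k+1)) := by rw [show N + (k+1) = N+k+1 from rfl]; exact h2
    have h1 : Tendsto (fun k => x (N + k)) atTop atTop :=
      tendsto_atTop_mono hgrow ((tendsto_pow_atTop_atTop_of_one_lt hN).comp (tendsto_add_atTop_nat 1))
    have h2 : Tendsto (fun k => x (k + N)) atTop atTop := by
      simpa [add_comm] using h1
    exact (tendsto_add_atTop_iff_nat N).mp h2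
  · left
    push_neg at hesc
    -- x bounded in [0,1]
    have hbdd : IsBoundedUnder (· ≤ ·) atTop x := isBoundedUnder_of ⟨1, fun n => hesc n⟩
    have hbdd' : IsBoundedUnder (· ≥ ·) atTop x := isBoundedUnder_of ⟨0, fun n => hx0 n⟩
    set S := limsup x atTop with hS
    have hS0 : 0 ≤ S := le_limsup_of_frequently_le
      (Frequently.of_forall (fun n => hx0 n)) hbdd
    have hS1 : S ≤ 1 := limsup_le_of_le hbdd'.isCoboundedUnder_le
      (Eventually.of_forall (fun n => hesc n))
    -- the two-step lower bound
    have hstep : ∀ n, x n ^ 4 + a (n+2) * a (n+1) * x n ≤ x (n+2) := by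
      intro n
      have h1 : x n ^ 2 ≤ x (n+1) := hsq n
      have h2 : x (n+1) ^ 2 ≤ x (n+2) := by
        have := mul_nonneg (ha' (n+1)).1.le (hy0 (n+1))
        rw [hx (n+1)]; linarith [hx (n+1)]
      have h3 : (x n ^2)^2 ≤ x (n+1)^2 := pow_le_pow_left₀ (by positivity) h1 2
      have h4 : x (n+2) = x (n+1)^2 + a (n+2) * (a (n+1) * x n) := by
        rw [hx (n+1), hy n]
      rw [h4]
      have h5 : x n ^ 4 ≤ x (n+1)^2 := by nlinarith [h3]
      have h6 : a (n+2) * a (n+1) * x n = a (n+2) * (a (n+1) * x n) := by ring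
      linarith [h6.le, h6.ge]
    -- S = 0
    have hSzero : S = 0 := by
      by_contra hne
      have hSpos : 0 < S := lt_of_le_of_ne hS0 (Ne.symm hne)
      set ε := min (S/2) (S^4/64) with hε
      have hεpos : 0 < ε := lt_min (by linarith) (by positivity)
      have hεS : ε ≤ S/2 := min_le_left _ _
      have hε4 : ε ≤ S^4/64 := min_le_right _ _
      -- eventually x m < S + ε
      have hev1 : ∀ᶠ m in atTop, x m < S + ε :=
        eventually_lt_of_limsup_lt (by linarith) hbdd
      -- eventually a j > 1 - ε/2
      have hev2 : ∀ᶠ j in atTop, 1 - ε/2 < a j :=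
        hlim.eventually (eventually_gt_nhds (by linarith))
      obtain ⟨M1, hM1⟩ := eventually_atTop.mp hev1
      obtain ⟨M2, hM2⟩ := eventually_atTop.mp hev2
      -- frequently x n > S - ε
      have hfr : ∃ᶠ n in atTop, S - ε < x n :=
        frequently_lt_of_lt_limsup hbdd'.isCoboundedUnder_le (by linarith)
      obtain ⟨n, hn, hxn⟩ := frequently_atTop.mp hfr (max M1 M2)
      have hn1 : M1 ≤ n := le_trans (le_max_left _ _) hn
      have hn2 : M2 ≤ n := le_trans (le_max_right _ _) hn
      have hup : x (n+2) < S + ε := hM1 (n+2) (by omega)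
      have ha1 : 1 - ε/2 < a (n+1) := hM2 (n+1) (by omega)
      have ha2 : 1 - ε/2 < a (n+2) := hM2 (n+2) (by omega)
      have hSε : 0 < S - ε := by
        have : ε ≤ S/2 := hεS
        linarith
      -- chain
      have hxnle : x n ≤ 1 := hesc n
      have hεle : ε ≤ 1/2 := by nlinarith
      have hc1 : (S - ε)^4 ≤ x n ^4 := pow_le_pow_left₀ hSε.le hxn.le 4
      have hc2 : (1 - ε/2)*(1 - ε/2)*(S - ε) ≤ a (n+2) * a (n+1) * x n := by
        have h1 : (0:ℝ) < 1 - ε/2 := by linarith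
        have h7 : (1-ε/2)*(1-ε/2) ≤ a (n+2) * a (n+1) :=
          mul_le_mul ha2.le ha1.le h1.le (le_trans h1.le ha2.le)
        exact mul_le_mul h7 hxn.le hSε.le
          (mul_nonneg (le_trans h1.le ha2.le) (le_trans h1.le ha1.le))
      have hmain : (S - ε)^4 + (1 - ε/2)*(1-ε/2)*(S-ε) < S + ε := by
        calc (S - ε)^4 + (1 - ε/2)*(1-ε/2)*(S-ε)
            ≤ x n ^4 + a (n+2) * a (n+1) * x n := by linarith
          _ ≤ x (n+2) := hstep n
          _ < S + ε := hup
      -- derive numeric contradiction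
      have hq : (S/2)^4 ≤ (S - ε)^4 := pow_le_pow_left₀ (by linarith) (by linarith) 4
      nlinarith [hq, hmain, hSpos, hεS, hε4, sq_nonneg ε, sq_nonneg S]
    -- limsup = 0 → tendsto 0
    have hlim0 : liminf x atTop = limsup x atTop := by
      have h1 : 0 ≤ liminf x atTop := le_liminf_of_le hbdd.isCoboundedUnder_ge
        (Eventually.of_forall (fun n => hx0 n))
      have h2 : liminf x atTop ≤ limsup x atTop := liminf_le_limsup hbdd hbdd'
      rw [← hS, hSzero] at h2 ⊢
      linarith
    have hxtend : Tendsto x atTop (nhds 0) := by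
      have := tendsto_of_liminf_eq_limsup hlim0 rfl hbdd hbdd'
      rwa [← hS, hSzero] at this
    refine ⟨hxtend, ?_⟩
    -- y (n+1) = a (n+1) x n ≤ x n
    have hy' : Tendsto (fun n => y (n+1)) atTop (nhds 0) := by
      apply squeeze_zero (fun n => hy0 (n+1)) (fun n => ?_) hxtend
      rw [hy n]
      nlinarith [(ha' n).1, (ha' n).2, hx0 n]
    exact (tendsto_add_atTop_iff_nat 1).mp hy'


lemma norm_E2 (v : E2) : ‖v‖ = Real.sqrt (‖v 0‖^2 + ‖v 1‖^2) := by
  rw [EuclideanSpace.norm_eq, Fin.sum_univ_two]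

lemma coord_le_norm (v : E2) : ‖v 0‖ ≤ ‖v‖ := by
  rw [norm_E2]
  calc ‖v 0‖ = Real.sqrt (‖v 0‖^2) := (Real.sqrt_sq (norm_nonneg _)).symm
    _ ≤ _ := Real.sqrt_le_sqrt (le_add_of_nonneg_right (by positivity))

lemma norm_le_sum (v : E2) : ‖v‖ ≤ ‖v 0‖ + ‖v 1‖ := by
  rw [norm_E2]
  calc Real.sqrt (‖v 0‖^2 + ‖v 1‖^2) ≤ Real.sqrt ((‖v 0‖ + ‖v 1‖)^2) := by
        apply Real.sqrt_le_sqrt; nlinarith [norm_nonneg (v 0), norm_nonneg (v 1)]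
    _ = ‖v 0‖ + ‖v 1‖ := Real.sqrt_sq (by positivity)


/-- if `a_j ∈ (0,1)` are real with `a_j → 1` and
`f_j(z,w) = (z² + a_j w, a_j z)`, then every point of the real quadrant
`ℝ²₊ ⊂ ℂ²` either converges to `0` or escapes to `∞` under the sequence,
and exactly one of the two alternatives holds. -/
theorem quadrant_dichotomy (a : ℕ → ℝ)
    (ha : ∀ j, 1 ≤ j → a j ∈ Set.Ioo (0 : ℝ) 1)
    (hlim : Tendsto a atTop (nhds 1))
    (p : E2)
    (hre0 : (p 0).im = 0) (hnn0 : 0 ≤ (p 0).re)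
    (hre1 : (p 1).im = 0) (hnn1 : 0 ≤ (p 1).re) :
    Xor' (Tendsto (fun n => seqComp (fun j => henon (a j : ℂ)) n p) atTop (nhds 0))
      (Tendsto (fun n => ‖seqComp (fun j => henon (a j : ℂ)) n p‖) atTop atTop) := by
  set F : ℕ → E2 → E2 := fun j => henon (a j : ℂ) with hF
  set q : ℕ → E2 := fun n => seqComp F n p with hq
  set x : ℕ → ℝ := fun n => (q n 0).re with hxdef
  set y : ℕ → ℝ := fun n => (q n 1).re with hydef
  have hrec0 : ∀ n, q (n+1) 0 = (q n 0)^2 + (a (n+1) : ℂ) * q n 1 := fun n => rfl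
  have hrec1 : ∀ n, q (n+1) 1 = (a (n+1) : ℂ) * q n 0 := fun n => rfl
  have hinv : ∀ n, (q n 0).im = 0 ∧ (q n 1).im = 0 ∧ 0 ≤ x n ∧ 0 ≤ y n := by
    intro n
    induction n with
    | zero => exact ⟨hre0, hre1, hnn0, hnn1⟩
    | succ n ih =>
      obtain ⟨i0, i1, r0, r1⟩ := ih
      have ha' : 0 < a (n+1) := (ha (n+1) (by omega)).1
      constructor
      · rw [hrec0]; simp [sq, Complex.add_im, Complex.mul_im, i0, i1]
      constructor
      · rw [hrec1]; simp [Complex.mul_im, i0]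
      constructor
      · show 0 ≤ (q (n+1) 0).re
        rw [hrec0]
        simp only [sq, Complex.add_re, Complex.mul_re, Complex.ofReal_re,
          Complex.ofReal_im, i0, i1]
        simp only [mul_zero, zero_mul, sub_zero]
        have : (0:ℝ) ≤ (q n 0).re * (q n 0).re := mul_self_nonneg _
        nlinarith [mul_nonneg ha'.le r1]
      · show 0 ≤ (q (n+1) 1).re
        rw [hrec1]
        simp only [Complex.mul_re, Complex.ofReal_re, Complex.ofReal_im, i0]
        simp only [zero_mul, mul_zero, sub_zero]
        exact mul_nonneg ha'.le r0
  have hx0 : ∀ n, 0 ≤ x n := fun n => (hinv n).2.2.1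
  have hy0 : ∀ n, 0 ≤ y n := fun n => (hinv n).2.2.2
  have hxrec : ∀ n, x (n+1) = x n ^2 + a (n+1) * y n := by
    intro n
    show (q (n+1) 0).re = _
    rw [hrec0]
    simp only [sq, Complex.add_re, Complex.mul_re, Complex.ofReal_re, Complex.ofReal_im,
      (hinv n).1, (hinv n).2.1]
    ring
  have hyrec : ∀ n, y (n+1) = a (n+1) * x n := by
    intro n
    show (q (n+1) 1).re = _
    rw [hrec1]
    simp [Complex.mul_re, (hinv n).1]
    exact Or.inl rfl
  have hnx : ∀ n, ‖q n 0‖ = x n := by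
    intro n
    rw [show q n 0 = ((x n : ℝ) : ℂ) from Complex.ext rfl (hinv n).1]
    simp [abs_of_nonneg (hx0 n)]
  have hny : ∀ n, ‖q n 1‖ = y n := by
    intro n
    rw [show q n 1 = ((y n : ℝ) : ℂ) from Complex.ext rfl (hinv n).2.1]
    simp [abs_of_nonneg (hy0 n)]
  rcases key a x y ha hlim hx0 hy0 hxrec hyrec with ⟨hxt, hyt⟩ | hesc
  · -- converges to 0
    have hnorm : Tendsto (fun n => ‖q n‖) atTop (nhds 0) := by
      apply squeeze_zero (fun n => norm_nonneg _) (fun n => ?_) (by simpa using hxt.add hyt)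
      calc ‖q n‖ ≤ ‖q n 0‖ + ‖q n 1‖ := norm_le_sum _
        _ = x n + y n := by rw [hnx, hny]
    have hq0 : Tendsto q atTop (nhds 0) := tendsto_zero_iff_norm_tendsto_zero.mpr hnorm
    exact Or.inl ⟨hq0, fun hcon => not_tendsto_atTop_of_tendsto_nhds hnorm hcon⟩
  · -- escapes
    have hnorm : Tendsto (fun n => ‖q n‖) atTop atTop := by
      apply tendsto_atTop_mono (fun n => ?_) hesc
      rw [← hnx n]; exact coord_le_norm _
    refine Or.inr ⟨hnorm, fun hcon => ?_⟩
    have : Tendsto (fun n => ‖q n‖) atTop (nhds 0) :=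
      tendsto_zero_iff_norm_tendsto_zero.mp hcon
    exact not_tendsto_atTop_of_tendsto_nhds this hnorm

end
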